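/- With G constructed from G₁,...,G_t as above (subdividing each designated edge e_i twice to get u_i, v_i and adding connector edges {v_i, u_{i+1}} cyclically, t ≥ 2), fix i and suppose G has a cycle C containing all vertices of X = V(G_i) ∪ {u_i, v_i}, where |V(G_i)| = n. Then G_i has a Hamiltonian cycle containing e_i. -/

import Mathlib

open SimpleGraph Walk List

section generic

variable {α : Type*} {Γ : SimpleGraph α}

private lemma auxGLcons {β : Type*} {l : List β} (e : β) (h : l ≠ []) :
    (e :: l).getLast? = l.getLast? := by
  cases l with
  | nil => exact absurd rfl h
  | cons a l => exact List.getLast?_cons_cons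

private lemma auxSupSplit {x y : α} (p : Γ.Walk x y) :
    p.support = p.support.dropLast ++ [y] := by
  induction p with
  | nil => simp
  | cons h p ih =>
    rw [Walk.support_cons, List.dropLast_cons_of_ne_nil p.support_ne_nil, List.cons_append]
    exact congrArg _ ih

private lemma auxMemDropLast {x y z : α} (p : Γ.Walk x y) (hz : z ∈ p.support) (hne : z ≠ y) :
    z ∈ p.support.dropLast := by
  rw [auxSupSplit p] at hz
  rcases List.mem_append.mp hz with h | h
  · exact h
  · simp only [List.mem_singleton] at h; exact absurd h hne

private lemma auxEndNotDropLast {x y : α} {p : Γ.Walk x y} (hp : p.IsPath) :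
    y ∉ p.support.dropLast := by
  have h := hp.support_nodup
  rw [auxSupSplit p] at h
  intro hy
  exact List.disjoint_of_nodup_append h hy (by simp)

private lemma auxLastEdge {x y : α} (p : Γ.Walk x y) (hp : ¬ p.Nil) :
    ∃ z ∈ p.support.dropLast, p.edges.getLast? = some s(z, y) := by
  induction p with
  | nil => simp at hp
  | cons h p ih =>
    rename_i xs ms ys
    cases p with
    | nil => exact ⟨xs, by simp, by simp⟩
    | cons h' p' =>
      obtain ⟨z, hz, hgl⟩ := ih (by simp)
      refine ⟨z, ?_, ?_⟩
      · rw [Walk.support_cons, List.dropLast_cons_of_ne_nil (Walk.support_ne_nil _)]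
        exact List.mem_cons_of_mem _ hz
      · simp only [Walk.edges_cons] at hgl ⊢
        rw [List.getLast?_cons_cons]
        exact hgl

private lemma auxEdgeEnd {x y : α} (p : Γ.Walk x y) :
    p.IsPath → ∀ e ∈ p.edges, y ∈ e → p.edges.getLast? = some e := by
  induction p with
  | nil => intro _ e he; simp at he
  | cons h p ih =>
    intro hp e he hy
    rw [Walk.edges_cons] at he ⊢
    rcases List.mem_cons.mp he with rfl | he'
    · cases p with
      | nil => simp
      | cons h' p' =>
        exfalso
        rcases Sym2.mem_iff.mp hy with rfl | rfl
        · exact ((Walk.cons_isPath_iff _ _).mp hp).2 (Walk.end_mem_support _)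
        · have h1 := ((Walk.cons_isPath_iff _ _).mp hp).1
          rw [Walk.isPath_iff_eq_nil] at h1
          simp at h1
    · cases p with
      | nil => simp at he'
      | cons h' p' =>
        rw [auxGLcons _ (by simp)]
        exact ih ((Walk.cons_isPath_iff _ _).mp hp).1 e he' hy

private lemma auxExit (S T : Set α)
    (hcl : ∀ x ∈ S, ∀ z, Γ.Adj x z → z ∈ S ∨ z ∈ T) :
    ∀ {x y : α} (p : Γ.Walk x y), x ∈ S → (∀ z ∈ p.support.dropLast, z ∉ T) →
      ∀ z ∈ p.support.dropLast, z ∈ S := by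
  intro x y p
  induction p with
  | nil => intro _ _ z hz; simp at hz
  | cons h p ih =>
    rename_i xs ms ys
    intro hx hT z hz
    rw [Walk.support_cons, List.dropLast_cons_of_ne_nil p.support_ne_nil] at hz hT
    rcases List.mem_cons.mp hz with rfl | hz'
    · exact hx
    · have hmm : ms ∈ p.support.dropLast := by
        cases p with
        | nil => simp at hz'
        | cons h' p' =>
          rw [Walk.support_cons, List.dropLast_cons_of_ne_nil p'.support_ne_nil]
          exact List.mem_cons_self
      have hmS := (hcl xs hx _ h).resolve_right (hT _ (List.mem_cons_of_mem _ hmm))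
      exact ih hmS (fun z hz => hT z (List.mem_cons_of_mem _ hz)) z hz'

private lemma auxEnter (S T : Set α)
    (hcl : ∀ x ∈ S, ∀ z, Γ.Adj z x → z ∈ S ∨ z ∈ T) :
    ∀ {x y : α} (p : Γ.Walk x y), x ∉ S → (∀ z ∈ p.support.dropLast, z ∉ T) →
      ∀ z ∈ p.support.dropLast, z ∉ S := by
  intro x y p
  induction p with
  | nil => intro _ _ z hz; simp at hz
  | cons h p ih =>
    rename_i xs ms ys
    intro hx hT z hz
    rw [Walk.support_cons, List.dropLast_cons_of_ne_nil p.support_ne_nil] at hz hT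
    rcases List.mem_cons.mp hz with rfl | hz'
    · exact hx
    · have hmnS : ms ∉ S := by
        intro hmS
        rcases hcl _ hmS xs h with hxS | hxT
        · exact hx hxS
        · exact hT xs (List.mem_cons_self) hxT
      exact ih hmnS (fun z hz => hT z (List.mem_cons_of_mem _ hz)) z hz'

private lemma auxSeal (S : Set α) (u v A' B' : α)
    (hcl : ∀ x ∈ S, ∀ z, Γ.Adj z x → z ∈ S ∨ (z = u ∧ x = A') ∨ (z = v ∧ x = B')) :
    ∀ {x y : α} (p : Γ.Walk x y), x ∉ S →
      (∀ e ∈ p.edges, e ≠ s(u, A') ∧ e ≠ s(v, B')) →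
      ∀ z ∈ p.support, z ∉ S := by
  intro x y p
  induction p with
  | nil => intro hx _ z hz; rw [Walk.support_nil, List.mem_singleton] at hz; exact hz ▸ hx
  | cons h p ih =>
    rename_i xs ms ys
    intro hx he z hz
    rw [Walk.support_cons] at hz
    rcases List.mem_cons.mp hz with rfl | hz'
    · exact hx
    · have hmnS : ms ∉ S := by
        intro hmS
        rcases hcl _ hmS xs h with hxS | ⟨rfl, hm⟩ | ⟨rfl, hm⟩
        · exact hx hxS
        · exact (he _ (by rw [Walk.edges_cons]; exact List.mem_cons_self)).1 (by rw [hm])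
        · exact (he _ (by rw [Walk.edges_cons]; exact List.mem_cons_self)).2 (by rw [hm])
      exact ih hmnS (fun e her => he e (by rw [Walk.edges_cons]; exact List.mem_cons_of_mem _ her)) z hz'

private lemma auxCycleReverse {z : α} {p : Γ.Walk z z} (hp : p.IsCycle) : p.reverse.IsCycle := by
  rw [Walk.isCycle_def] at hp ⊢
  obtain ⟨ht, hnn, hnd⟩ := hp
  refine ⟨Walk.IsTrail.reverse _ ht, ?_, ?_⟩
  · intro h
    apply hnn
    have := congrArg Walk.reverse h
    rwa [Walk.reverse_reverse] at this
  · cases p with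
    | nil => exact absurd rfl hnn
    | cons h q =>
      rw [Walk.support_reverse, Walk.support_cons]
      rw [Walk.support_cons, List.tail_cons] at hnd
      have hsp := auxSupSplit q
      rw [List.reverse_cons, hsp, List.reverse_append]
      have : (([z].reverse ++ q.support.dropLast.reverse) ++ [z]).tail
          = q.support.dropLast.reverse ++ [z] := by simp
      rw [this]
      rw [hsp] at hnd
      exact ((List.reverse_perm _).append_right _).nodup_iff.mpr hnd

private lemma auxClosedMem {z x : α} {p : Γ.Walk z z} (hp : ¬ p.Nil) :
    x ∈ p.support ↔ x ∈ p.support.tail := by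
  cases p with
  | nil => simp at hp
  | cons h q =>
    rw [Walk.support_cons, List.tail_cons]
    constructor
    · intro hx
      rcases List.mem_cons.mp hx with rfl | hx'
      · exact q.end_mem_support
      · exact hx'
    · exact fun hx => List.mem_cons_of_mem _ hx

private lemma auxMemRotate [DecidableEq α] {z w x : α} {c : Γ.Walk z z} (hc : c.IsCycle) (h : w ∈ c.support) :
    x ∈ (c.rotate _ h).support ↔ x ∈ c.support := by
  rw [auxClosedMem (hc.rotate h).not_nil, auxClosedMem hc.not_nil,
    (Walk.support_rotate c _ h).mem_iff]

end generic


section generic2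

variable {α : Type*} [DecidableEq α] {Γ : SimpleGraph α}

private lemma auxSplit {x y m : α} (p : Γ.Walk x y) (hp : p.IsPath) (hm : m ∈ p.support) :
    (∀ z ∈ p.support, z ∈ (p.takeUntil m hm).support ∨ z ∈ (p.dropUntil m hm).support.tail) ∧
    (∀ z ∈ (p.takeUntil m hm).support, z ∉ (p.dropUntil m hm).support.tail) ∧
    (m ≠ y → y ∈ (p.dropUntil m hm).support.tail) := by
  have hspec := p.take_spec hm
  refine ⟨?_, ?_, ?_⟩
  · intro z hz
    rw [← hspec, Walk.support_append] at hz
    exact List.mem_append.mp hz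
  · have hnd := hp.support_nodup
    rw [← hspec, Walk.support_append] at hnd
    exact fun z hz hz' => List.disjoint_of_nodup_append hnd hz hz'
  · intro hne
    have hend := (p.dropUntil m hm).end_mem_support
    rw [Walk.support_eq_cons] at hend
    rcases List.mem_cons.mp hend with h | h
    · exact absurd h.symm hne
    · exact h

end generic2

/-- The underlying relation of the cross-composition graph: vertex-disjoint copies of the
graphs `G i` (on `Fin t × V`), with the designated edge `{a i, b i}` of each copy replaced
by the path `a i, uᵢ, vᵢ, b i` (where `uᵢ = inr (i, false)`, `vᵢ = inr (i, true)` are new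
vertices), plus the connector edges `{vᵢ, u_{i+1}}` (indices modulo `t`). -/
def linkRel (t : ℕ) [NeZero t] (V : Type*) (G : Fin t → SimpleGraph V) (a b : Fin t → V) :
    ((Fin t × V) ⊕ (Fin t × Bool)) → ((Fin t × V) ⊕ (Fin t × Bool)) → Prop
  | Sum.inl (i, x), Sum.inl (j, y) => i = j ∧ (G i).Adj x y ∧ s(x, y) ≠ s(a i, b i)
  | Sum.inl (i, x), Sum.inr (j, c) => i = j ∧ ((c = false ∧ x = a i) ∨ (c = true ∧ x = b i))
  | Sum.inr _, Sum.inl _ => False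
  | Sum.inr (i, c), Sum.inr (j, d) =>
      (j = i ∧ c = false ∧ d = true) ∨ (j = i + 1 ∧ c = true ∧ d = false)

section spec

variable {t : ℕ} [NeZero t] {V : Type*} {G : Fin t → SimpleGraph V} {a b : Fin t → V}

private lemma aux_adjS (i : Fin t) (x : V) (z : (Fin t × V) ⊕ (Fin t × Bool))
    (h : (SimpleGraph.fromRel (linkRel t V G a b)).Adj (Sum.inl (i, x)) z) :
    (∃ y : V, z = Sum.inl (i, y) ∧ (G i).Adj x y ∧ s(x, y) ≠ s(a i, b i)) ∨
      (z = Sum.inr (i, false) ∧ x = a i) ∨ (z = Sum.inr (i, true) ∧ x = b i) := by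
  rw [SimpleGraph.fromRel_adj] at h
  obtain ⟨hne, h | h⟩ := h
  · rcases z with ⟨j, y⟩ | ⟨j, c⟩
    · obtain ⟨rfl, hadj, hs⟩ := h
      exact Or.inl ⟨y, rfl, hadj, hs⟩
    · obtain ⟨rfl, h⟩ := h
      rcases h with ⟨rfl, rfl⟩ | ⟨rfl, rfl⟩
      · exact Or.inr (Or.inl ⟨rfl, rfl⟩)
      · exact Or.inr (Or.inr ⟨rfl, rfl⟩)
  · rcases z with ⟨j, y⟩ | ⟨j, c⟩
    · obtain ⟨rfl, hadj, hs⟩ := h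
      refine Or.inl ⟨y, rfl, hadj.symm, ?_⟩
      rwa [Sym2.eq_swap] at hs
    · exact h.elim

private lemma aux_project (i : Fin t) :
    ∀ {s u : (Fin t × V) ⊕ (Fin t × Bool)}
      (p : (SimpleGraph.fromRel (linkRel t V G a b)).Walk s u),
      (∀ z ∈ p.support, z ∈ Set.range (fun x : V =>
        (Sum.inl (i, x) : (Fin t × V) ⊕ (Fin t × Bool)))) →
      ∀ x y : V, s = Sum.inl (i, x) → u = Sum.inl (i, y) →
      ∃ q : (G i).Walk x y,
        p.support = q.support.map (fun x => (Sum.inl (i, x) : (Fin t × V) ⊕ (Fin t × Bool))) ∧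
        ∀ e ∈ q.edges, e ≠ s(a i, b i) := by
  intro s u p
  induction p with
  | nil =>
    intro _ x y h1 h2
    rw [h1] at h2
    obtain rfl : x = y := by
      injection h2 with h2
      exact (Prod.mk.injEq _ _ _ _ ▸ h2 : _ ∧ _).2
    subst h1
    exact ⟨SimpleGraph.Walk.nil, by simp, by simp⟩
  | cons h p ih =>
    rename_i xs ms ys
    intro hS x y h1 hu
    subst h1
    obtain ⟨x', hm⟩ := hS ms (List.mem_cons_of_mem _ p.start_mem_support)
    subst hm
    have hax : (G i).Adj x x' ∧ s(x, x') ≠ s(a i, b i) := by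
      rcases aux_adjS i x _ h with ⟨y', he, hadj, hs⟩ | ⟨he, _⟩ | ⟨he, _⟩
      · obtain rfl : x' = y' := by
          injection he with he
          exact (Prod.mk.injEq _ _ _ _ ▸ he : _ ∧ _).2
        exact ⟨hadj, hs⟩
      · simp at he
      · simp at he
    obtain ⟨q, hsup, hedge⟩ := ih (fun z hz => hS z (List.mem_cons_of_mem _ hz)) x' y rfl hu
    refine ⟨SimpleGraph.Walk.cons hax.1 q, ?_, ?_⟩
    · rw [SimpleGraph.Walk.support_cons, hsup, SimpleGraph.Walk.support_cons, List.map_cons]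
    · intro e he
      rw [SimpleGraph.Walk.edges_cons] at he
      rcases List.mem_cons.mp he with rfl | he'
      · exact hax.2
      · exact hedge e he'

end spec


section spec2

variable {t : ℕ} [NeZero t] {V : Type*} {G : Fin t → SimpleGraph V} {a b : Fin t → V}

private lemma aux_hclS (i : Fin t) :
    ∀ z ∈ Set.range (fun x : V => (Sum.inl (i, x) : (Fin t × V) ⊕ (Fin t × Bool))),
      ∀ w, (SimpleGraph.fromRel (linkRel t V G a b)).Adj z w →
        w ∈ Set.range (fun x : V => (Sum.inl (i, x) : (Fin t × V) ⊕ (Fin t × Bool))) ∨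
        w ∈ ({Sum.inr (i, false), Sum.inr (i, true)} :
          Set ((Fin t × V) ⊕ (Fin t × Bool))) := by
  rintro _ ⟨x, rfl⟩ w h
  rcases aux_adjS i x w h with ⟨y, rfl, _, _⟩ | ⟨rfl, _⟩ | ⟨rfl, _⟩
  · exact Or.inl ⟨y, rfl⟩
  · exact Or.inr (by simp)
  · exact Or.inr (by simp)

private lemma aux_hclS' (i : Fin t) :
    ∀ z ∈ Set.range (fun x : V => (Sum.inl (i, x) : (Fin t × V) ⊕ (Fin t × Bool))),
      ∀ w, (SimpleGraph.fromRel (linkRel t V G a b)).Adj w z →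
        w ∈ Set.range (fun x : V => (Sum.inl (i, x) : (Fin t × V) ⊕ (Fin t × Bool))) ∨
        w ∈ ({Sum.inr (i, false), Sum.inr (i, true)} :
          Set ((Fin t × V) ⊕ (Fin t × Bool))) :=
  fun z hz w h => aux_hclS i z hz w h.symm

private lemma aux_hclSeal (i : Fin t) :
    ∀ z ∈ Set.range (fun x : V => (Sum.inl (i, x) : (Fin t × V) ⊕ (Fin t × Bool))),
      ∀ w, (SimpleGraph.fromRel (linkRel t V G a b)).Adj w z →
        w ∈ Set.range (fun x : V => (Sum.inl (i, x) : (Fin t × V) ⊕ (Fin t × Bool))) ∨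
        (w = Sum.inr (i, false) ∧ z = Sum.inl (i, a i)) ∨
        (w = Sum.inr (i, true) ∧ z = Sum.inl (i, b i)) := by
  rintro _ ⟨x, rfl⟩ w h
  rcases aux_adjS i x w h.symm with ⟨y, rfl, _, _⟩ | ⟨rfl, rfl⟩ | ⟨rfl, rfl⟩
  · exact Or.inl ⟨y, rfl⟩
  · exact Or.inr (Or.inl ⟨rfl, rfl⟩)
  · exact Or.inr (Or.inr ⟨rfl, rfl⟩)

variable [DecidableEq V]

private lemma aux_vside (i : Fin t)
    (q : (SimpleGraph.fromRel (linkRel t V G a b)).Walk (Sum.inl (i, b i)) (Sum.inr (i, true)))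
    (hq : q.IsPath) (hu : (Sum.inr (i, false) : (Fin t × V) ⊕ (Fin t × Bool)) ∈ q.support) :
    s(Sum.inl (i, a i), Sum.inr (i, false)) ∈ q.edges := by
  obtain ⟨hsplit, hdisj, hlast⟩ := auxSplit q hq hu
  have hPpath : (q.takeUntil _ hu).IsPath := hq.takeUntil hu
  have hvtail : (Sum.inr (i, true) : (Fin t × V) ⊕ (Fin t × Bool))
      ∈ (q.dropUntil _ hu).support.tail := hlast (by simp)
  have hvP : (Sum.inr (i, true) : (Fin t × V) ⊕ (Fin t × Bool))
      ∉ (q.takeUntil _ hu).support := fun h => hdisj _ h hvtail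
  have hdl : ∀ z ∈ (q.takeUntil _ hu).support.dropLast,
      z ∉ ({Sum.inr (i, false), Sum.inr (i, true)} :
        Set ((Fin t × V) ⊕ (Fin t × Bool))) := by
    intro z hz hzT
    have hzs : z ∈ (q.takeUntil _ hu).support := by
      rw [auxSupSplit]; exact List.mem_append_left _ hz
    simp only [Set.mem_insert_iff, Set.mem_singleton_iff] at hzT
    rcases hzT with rfl | rfl
    · exact auxEndNotDropLast hPpath hz
    · exact hvP hzs
  have hS := auxExit _ _ (aux_hclS i) (q.takeUntil _ hu) ⟨b i, rfl⟩ hdl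
  have hPnn : ¬(q.takeUntil _ hu).Nil := SimpleGraph.Walk.not_nil_of_ne (by simp)
  obtain ⟨z3, hz3, hgl3⟩ := auxLastEdge _ hPnn
  obtain ⟨y3, rfl⟩ := hS z3 hz3
  have hedge : s(Sum.inl (i, y3), Sum.inr (i, false)) ∈ (q.takeUntil _ hu).edges :=
    List.mem_of_getLast? hgl3
  have hy3 : y3 = a i := by
    rcases aux_adjS i y3 _ (SimpleGraph.Walk.adj_of_mem_edges _ hedge) with
      ⟨y', he, _, _⟩ | ⟨_, h2⟩ | ⟨he, _⟩
    · simp at he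
    · exact h2
    · simp at he
  subst hy3
  exact SimpleGraph.Walk.edges_takeUntil_subset _ hu hedge

private lemma aux_good (hab : ∀ i, (G i).Adj (a i) (b i)) (i : Fin t)
    (q : (SimpleGraph.fromRel (linkRel t V G a b)).Walk (Sum.inl (i, a i)) (Sum.inr (i, false)))
    (hq : q.IsPath) (hcov : ∀ x : V, Sum.inl (i, x) ∈ q.support)
    (hv : (Sum.inr (i, true) : (Fin t × V) ⊕ (Fin t × Bool)) ∈ q.support) :
    ∃ c : (G i).Walk (a i) (a i), c.IsHamiltonianCycle ∧ s(a i, b i) ∈ c.edges := by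
  obtain ⟨hqsplit, hqdisj, hqlast⟩ := auxSplit q hq hv
  have hPpath : (q.takeUntil _ hv).IsPath := hq.takeUntil hv
  have hRpath : (q.dropUntil _ hv).IsPath := hq.dropUntil hv
  have huR : (Sum.inr (i, false) : (Fin t × V) ⊕ (Fin t × Bool))
      ∈ (q.dropUntil _ hv).support.tail := hqlast (by simp)
  have huP : (Sum.inr (i, false) : (Fin t × V) ⊕ (Fin t × Bool))
      ∉ (q.takeUntil _ hv).support := fun h => hqdisj _ h huR
  have hPdl : ∀ z ∈ (q.takeUntil _ hv).support.dropLast,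
      z ∉ ({Sum.inr (i, false), Sum.inr (i, true)} :
        Set ((Fin t × V) ⊕ (Fin t × Bool))) := by
    intro z hz hzT
    have hzs : z ∈ (q.takeUntil _ hv).support := by
      rw [auxSupSplit]; exact List.mem_append_left _ hz
    simp only [Set.mem_insert_iff, Set.mem_singleton_iff] at hzT
    rcases hzT with rfl | rfl
    · exact huP hzs
    · exact auxEndNotDropLast hPpath hz
  have hPS := auxExit _ _ (aux_hclS i) (q.takeUntil _ hv) ⟨a i, rfl⟩ hPdl
  have hPnn : ¬(q.takeUntil _ hv).Nil := SimpleGraph.Walk.not_nil_of_ne (by simp)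
  obtain ⟨zB, hzBdl, hglP⟩ := auxLastEdge _ hPnn
  obtain ⟨yB, rfl⟩ := hPS _ hzBdl
  have hedgeB : s(Sum.inl (i, yB), Sum.inr (i, true)) ∈ (q.takeUntil _ hv).edges :=
    List.mem_of_getLast? hglP
  have hyB : yB = b i := by
    rcases aux_adjS i yB _ (SimpleGraph.Walk.adj_of_mem_edges _ hedgeB) with
      ⟨y', he, _, _⟩ | ⟨he, _⟩ | ⟨_, h2⟩
    · simp at he
    · simp at he
    · exact h2
  subst hyB
  have hBP : (Sum.inl (i, b i) : (Fin t × V) ⊕ (Fin t × Bool))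
      ∈ (q.takeUntil _ hv).support := by
    rw [auxSupSplit]; exact List.mem_append_left _ hzBdl
  obtain ⟨hPsplit, hPdisj, hPlast⟩ := auxSplit (q.takeUntil _ hv) hPpath hBP
  have hQpath : ((q.takeUntil _ hv).takeUntil _ hBP).IsPath := hPpath.takeUntil hBP
  have hQsub := SimpleGraph.Walk.support_takeUntil_subset (q.takeUntil _ hv) hBP
  have hvD2 : (Sum.inr (i, true) : (Fin t × V) ⊕ (Fin t × Bool))
      ∈ ((q.takeUntil _ hv).dropUntil _ hBP).support.tail := hPlast (by simp)
  have hvQ : (Sum.inr (i, true) : (Fin t × V) ⊕ (Fin t × Bool))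
      ∉ ((q.takeUntil _ hv).takeUntil _ hBP).support := fun h => hPdisj _ h hvD2
  have huQ : (Sum.inr (i, false) : (Fin t × V) ⊕ (Fin t × Bool))
      ∉ ((q.takeUntil _ hv).takeUntil _ hBP).support := fun h => huP (hQsub h)
  have hQdl : ∀ z ∈ ((q.takeUntil _ hv).takeUntil _ hBP).support.dropLast,
      z ∉ ({Sum.inr (i, false), Sum.inr (i, true)} :
        Set ((Fin t × V) ⊕ (Fin t × Bool))) := by
    intro z hz hzT
    have hzs : z ∈ ((q.takeUntil _ hv).takeUntil _ hBP).support := by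
      rw [auxSupSplit]; exact List.mem_append_left _ hz
    simp only [Set.mem_insert_iff, Set.mem_singleton_iff] at hzT
    rcases hzT with rfl | rfl
    · exact huQ hzs
    · exact hvQ hzs
  have hQS : ∀ z ∈ ((q.takeUntil _ hv).takeUntil _ hBP).support,
      z ∈ Set.range (fun x : V => (Sum.inl (i, x) : (Fin t × V) ⊕ (Fin t × Bool))) := by
    intro z hz
    rw [auxSupSplit] at hz
    rcases List.mem_append.mp hz with h | h
    · exact auxExit _ _ (aux_hclS i) _ ⟨a i, rfl⟩ hQdl z h
    · simp only [List.mem_singleton] at h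
      exact ⟨b i, h.symm⟩
  have hcovQ : ∀ x : V, (Sum.inl (i, x) : (Fin t × V) ⊕ (Fin t × Bool))
      ∈ ((q.takeUntil _ hv).takeUntil _ hBP).support := by
    intro x
    have hxP : (Sum.inl (i, x) : (Fin t × V) ⊕ (Fin t × Bool))
        ∈ (q.takeUntil _ hv).support := by
      rcases hqsplit _ (hcov x) with h | h
      · exact h
      · exfalso
        obtain ⟨m, hRadj, R', hReq⟩ := SimpleGraph.Walk.not_nil_iff.mp
          (SimpleGraph.Walk.not_nil_of_ne (p := q.dropUntil _ hv) (by simp))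
        rw [hReq, SimpleGraph.Walk.support_cons, List.tail_cons] at h
        have hR'path : R'.IsPath := by
          have h2 := hRpath; rw [hReq] at h2; exact h2.of_cons
        have hvR' : (Sum.inr (i, true) : (Fin t × V) ⊕ (Fin t × Bool)) ∉ R'.support := by
          have h2 := hRpath; rw [hReq, SimpleGraph.Walk.cons_isPath_iff] at h2; exact h2.2
        by_cases hm : m = Sum.inr (i, false)
        · subst hm
          rw [SimpleGraph.Walk.isPath_iff_eq_nil] at hR'path
          rw [hR'path] at h; simp at h
        · have hmnS : m ∉ Set.range
              (fun x : V => (Sum.inl (i, x) : (Fin t × V) ⊕ (Fin t × Bool))) := by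
            rintro ⟨ym, rfl⟩
            have hym : ym = b i := by
              rcases aux_adjS i ym _ hRadj.symm with ⟨y', he, _, _⟩ | ⟨he, _⟩ | ⟨_, h2⟩
              · simp at he
              · simp at he
              · exact h2
            subst hym
            exact hqdisj _ hBP (by
              rw [hReq, SimpleGraph.Walk.support_cons, List.tail_cons]
              exact R'.start_mem_support)
          have hR'dl : ∀ z ∈ R'.support.dropLast,
              z ∉ ({Sum.inr (i, false), Sum.inr (i, true)} :
                Set ((Fin t × V) ⊕ (Fin t × Bool))) := by
            intro z hz hzT
            simp only [Set.mem_insert_iff, Set.mem_singleton_iff] at hzT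
            rcases hzT with rfl | rfl
            · exact auxEndNotDropLast hR'path hz
            · exact hvR' (by rw [auxSupSplit]; exact List.mem_append_left _ hz)
          have henter := auxEnter _ _ (aux_hclS' i) R' hmnS hR'dl
          exact henter _ (auxMemDropLast R' h (by simp)) ⟨x, rfl⟩
    rcases hPsplit _ hxP with h | h
    · exact h
    · exfalso
      obtain ⟨m2, hD2adj, D2', hD2eq⟩ := SimpleGraph.Walk.not_nil_iff.mp
        (SimpleGraph.Walk.not_nil_of_ne (p := (q.takeUntil _ hv).dropUntil _ hBP) (by simp))
      rw [hD2eq, SimpleGraph.Walk.support_cons, List.tail_cons] at h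
      have hD2path : ((q.takeUntil _ hv).dropUntil _ hBP).IsPath := hPpath.dropUntil hBP
      by_cases hm2 : m2 = Sum.inr (i, true)
      · subst hm2
        have hD2'path : D2'.IsPath := by
          have h2 := hD2path; rw [hD2eq] at h2; exact h2.of_cons
        rw [SimpleGraph.Walk.isPath_iff_eq_nil] at hD2'path
        rw [hD2'path] at h; simp at h
      · have hD2'nn : ¬D2'.Nil := SimpleGraph.Walk.not_nil_of_ne hm2
        obtain ⟨z4, hz4, hgl4⟩ := auxLastEdge D2' hD2'nn
        have hedge4 : s(z4, Sum.inr (i, true)) ∈ (q.takeUntil _ hv).edges := by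
          apply SimpleGraph.Walk.edges_dropUntil_subset _ hBP
          rw [hD2eq, SimpleGraph.Walk.edges_cons]
          exact List.mem_cons_of_mem _ (List.mem_of_getLast? hgl4)
        have hglP' := auxEdgeEnd _ hPpath _ hedge4 (by simp)
        rw [hglP] at hglP'
        have hz4B : z4 = Sum.inl (i, b i) := by
          rcases Sym2.eq_iff.mp (Option.some.inj hglP') with ⟨h1, _⟩ | ⟨h1, h2⟩
          · exact h1.symm
          · simp at h1
        rw [hz4B] at hz4
        have h2 := hD2path
        rw [hD2eq, SimpleGraph.Walk.cons_isPath_iff] at h2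
        exact h2.2 (by rw [auxSupSplit]; exact List.mem_append_left _ hz4)
  obtain ⟨p0, hp0sup, hp0e⟩ := aux_project i _ hQS (a i) (b i) rfl rfl
  have hp0nd : p0.support.Nodup := by
    have h2 := hQpath.support_nodup
    rw [hp0sup] at h2
    exact h2.of_map
  have hp0path : p0.IsPath := (SimpleGraph.Walk.isPath_def _).mpr hp0nd
  have hp0cov : ∀ x : V, x ∈ p0.support := by
    intro x
    have h2 := hcovQ x
    rw [hp0sup] at h2
    rcases List.mem_map.mp h2 with ⟨x', hx', he⟩
    obtain rfl : x' = x := by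
      injection he with he
      exact (Prod.mk.injEq _ _ _ _ ▸ he : _ ∧ _).2
    exact hx'
  have hcyc : (SimpleGraph.Walk.cons (hab i) p0.reverse).IsCycle := by
    rw [SimpleGraph.Walk.cons_isCycle_iff]
    refine ⟨hp0path.reverse, ?_⟩
    rw [SimpleGraph.Walk.edges_reverse, List.mem_reverse]
    exact fun h => hp0e _ h rfl
  refine ⟨SimpleGraph.Walk.cons (hab i) p0.reverse, ?_,
    by rw [SimpleGraph.Walk.edges_cons]; exact List.mem_cons_self⟩
  rw [SimpleGraph.Walk.isHamiltonianCycle_iff_isCycle_and_support_count_tail_eq_one]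
  refine ⟨hcyc, fun x => ?_⟩
  rw [SimpleGraph.Walk.support_cons, List.tail_cons, SimpleGraph.Walk.support_reverse]
  exact List.count_eq_one_of_mem (by rw [List.nodup_reverse]; exact hp0nd)
    (by rw [List.mem_reverse]; exact hp0cov x)

end spec2

/-- If the cross-composition graph has a cycle containing all vertices of
`X = V(G_i) ∪ {uᵢ, vᵢ}` for some fixed `i`, then `G i` has a Hamiltonian cycle
containing the designated edge `{a i, b i}`. -/
theorem crossComposition_block_cycle_gives_hamiltonian (t : ℕ) [NeZero t] (ht : 2 ≤ t)
    {V : Type*} [Fintype V] [DecidableEq V]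
    (G : Fin t → SimpleGraph V) (a b : Fin t → V)
    (hab : ∀ i, (G i).Adj (a i) (b i)) (i : Fin t)
    (hcyc : ∃ (z : (Fin t × V) ⊕ (Fin t × Bool))
        (c : (SimpleGraph.fromRel (linkRel t V G a b)).Walk z z),
      c.IsCycle ∧ (∀ x : V, Sum.inl (i, x) ∈ c.support) ∧
        Sum.inr (i, false) ∈ c.support ∧ Sum.inr (i, true) ∈ c.support) :
    ∃ c : (G i).Walk (a i) (a i), c.IsHamiltonianCycle ∧ s(a i, b i) ∈ c.edges := by
  classical
  obtain ⟨z0, c0, hc0, hall, hu0, hv0⟩ := hcyc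
  have hC : (c0.rotate _ hu0).IsCycle := hc0.rotate hu0
  have hallC : ∀ x : V, (Sum.inl (i, x) : (Fin t × V) ⊕ (Fin t × Bool))
      ∈ (c0.rotate _ hu0).support := fun x => (auxMemRotate hc0 hu0).mpr (hall x)
  have hvC : (Sum.inr (i, true) : (Fin t × V) ⊕ (Fin t × Bool))
      ∈ (c0.rotate _ hu0).support := (auxMemRotate hc0 hu0).mpr hv0
  obtain ⟨s1, hadj1, q1, hCeq⟩ := SimpleGraph.Walk.not_nil_iff.mp hC.not_nil
  have hq1c := (SimpleGraph.Walk.cons_isCycle_iff q1 hadj1).mp (hCeq ▸ hC)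
  have hq1nn : ¬q1.Nil := SimpleGraph.Walk.not_nil_of_ne (fun h => hadj1.ne h.symm)
  obtain ⟨z1, hz1dl, hgl1⟩ := auxLastEdge q1 hq1nn
  by_cases hs1 : s1 = Sum.inl (i, a i)
  · subst hs1
    apply aux_good hab i q1 hq1c.1
    · intro x
      have h2 := hallC x; rw [hCeq, SimpleGraph.Walk.support_cons] at h2
      rcases List.mem_cons.mp h2 with h | h
      · exact absurd h (by simp)
      · exact h
    · have h2 := hvC; rw [hCeq, SimpleGraph.Walk.support_cons] at h2
      rcases List.mem_cons.mp h2 with h | h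
      · exact absurd h (by simp)
      · exact h
  · by_cases hz1A : z1 = Sum.inl (i, a i)
    · -- use the reverse of the cycle
      have hCr : (c0.rotate _ hu0).reverse.IsCycle := auxCycleReverse hC
      obtain ⟨s1', hadj1', q1', hCreq⟩ := SimpleGraph.Walk.not_nil_iff.mp hCr.not_nil
      have hq1'c := (SimpleGraph.Walk.cons_isCycle_iff q1' hadj1').mp (hCreq ▸ hCr)
      have hglC : (c0.rotate _ hu0).edges.getLast? = some s(z1, Sum.inr (i, false)) := by
        rw [hCeq, SimpleGraph.Walk.edges_cons, auxGLcons _ ?_]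
        · exact hgl1
        · intro h; rw [h] at hgl1; simp at hgl1
      have hhead : (c0.rotate _ hu0).reverse.edges.head? = some s(Sum.inr (i, false), s1') := by
        rw [hCreq, SimpleGraph.Walk.edges_cons]; simp
      rw [SimpleGraph.Walk.edges_reverse, List.head?_reverse, hglC] at hhead
      have heq := Option.some.inj hhead
      have hs1' : s1' = Sum.inl (i, a i) := by
        rcases Sym2.eq_iff.mp heq with ⟨h1, h2⟩ | ⟨h1, h2⟩
        · exact absurd h2 hadj1'.ne
        · exact h1.symm.trans hz1A
      subst hs1'
      apply aux_good hab i q1' hq1'c.1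
      · intro x
        have hx : (Sum.inl (i, x) : (Fin t × V) ⊕ (Fin t × Bool))
            ∈ (c0.rotate _ hu0).reverse.support := by
          rw [SimpleGraph.Walk.support_reverse, List.mem_reverse]; exact hallC x
        rw [hCreq, SimpleGraph.Walk.support_cons] at hx
        rcases List.mem_cons.mp hx with h | h
        · exact absurd h (by simp)
        · exact h
      · have hx : (Sum.inr (i, true) : (Fin t × V) ⊕ (Fin t × Bool))
            ∈ (c0.rotate _ hu0).reverse.support := by
          rw [SimpleGraph.Walk.support_reverse, List.mem_reverse]; exact hvC
        rw [hCreq, SimpleGraph.Walk.support_cons] at hx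
        rcases List.mem_cons.mp hx with h | h
        · exact absurd h (by simp)
        · exact h
    · -- contradiction: neither neighbour of u on the cycle is a i
      exfalso
      have hAu : ∀ e ∈ (c0.rotate _ hu0).edges,
          e ≠ s(Sum.inr (i, false), Sum.inl (i, a i)) := by
        intro e he hee
        rw [hCeq, SimpleGraph.Walk.edges_cons] at he
        rcases List.mem_cons.mp he with rfl | he'
        · rcases Sym2.eq_iff.mp hee with ⟨h1, h2⟩ | ⟨h1, h2⟩
          · exact hs1 h2
          · simp at h1
        · subst hee
          have h2 := auxEdgeEnd q1 hq1c.1 _ he' (by simp)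
          rw [hgl1] at h2
          rcases Sym2.eq_iff.mp (Option.some.inj h2) with ⟨h3, h4⟩ | ⟨h3, h4⟩
          · simp at h4
          · exact hz1A h3
      by_cases hvb : s(Sum.inr (i, true), Sum.inl (i, b i)) ∈ (c0.rotate _ hu0).edges
      · -- v–b is a cycle edge: rotate at v and find the path from b to u inside the block
        have hC' : ((c0.rotate _ hu0).rotate _ hvC).IsCycle := hC.rotate hvC
        have hmemE : ∀ e, e ∈ ((c0.rotate _ hu0).rotate _ hvC).edges ↔
            e ∈ (c0.rotate _ hu0).edges :=
          fun e => (SimpleGraph.Walk.rotate_edges (c0.rotate _ hu0) _ hvC).mem_iff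
        have huC' : (Sum.inr (i, false) : (Fin t × V) ⊕ (Fin t × Bool))
            ∈ ((c0.rotate _ hu0).rotate _ hvC).support :=
          (auxMemRotate hC hvC).mpr (c0.rotate _ hu0).start_mem_support
        obtain ⟨s2, hadj2, q2, hC'eq⟩ := SimpleGraph.Walk.not_nil_iff.mp hC'.not_nil
        have hq2c := (SimpleGraph.Walk.cons_isCycle_iff q2 hadj2).mp (hC'eq ▸ hC')
        have hq2nn : ¬q2.Nil := SimpleGraph.Walk.not_nil_of_ne (fun h => hadj2.ne h.symm)
        obtain ⟨z2, hz2dl, hgl2⟩ := auxLastEdge q2 hq2nn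
        have hq2edges : ∀ e ∈ q2.edges, e ∈ (c0.rotate _ hu0).edges := by
          intro e he
          apply (hmemE _).mp
          rw [hC'eq, SimpleGraph.Walk.edges_cons]
          exact List.mem_cons_of_mem _ he
        have hvb' : s(Sum.inr (i, true), Sum.inl (i, b i))
            ∈ ((c0.rotate _ hu0).rotate _ hvC).edges := (hmemE _).mpr hvb
        rw [hC'eq, SimpleGraph.Walk.edges_cons] at hvb'
        rcases List.mem_cons.mp hvb' with he | he
        · have hs2 : s2 = Sum.inl (i, b i) := by
            rcases Sym2.eq_iff.mp he with ⟨h1, h2⟩ | ⟨h1, h2⟩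
            · exact h2.symm
            · simp at h2
          subst hs2
          have huq2 : (Sum.inr (i, false) : (Fin t × V) ⊕ (Fin t × Bool)) ∈ q2.support := by
            have h2 := huC'; rw [hC'eq, SimpleGraph.Walk.support_cons] at h2
            rcases List.mem_cons.mp h2 with h | h
            · exact absurd h (by simp)
            · exact h
          exact hAu _ (hq2edges _ (aux_vside i q2 hq2c.1 huq2)) Sym2.eq_swap
        · have hz2B : z2 = Sum.inl (i, b i) := by
            have h2 := auxEdgeEnd q2 hq2c.1 _ he (by simp)
            rw [hgl2] at h2
            rcases Sym2.eq_iff.mp (Option.some.inj h2) with ⟨h3, h4⟩ | ⟨h3, h4⟩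
            · simp at h4
            · exact h3
          have hC'r : ((c0.rotate _ hu0).rotate _ hvC).reverse.IsCycle := auxCycleReverse hC'
          obtain ⟨s3, hadj3, q3, hC'req⟩ := SimpleGraph.Walk.not_nil_iff.mp hC'r.not_nil
          have hq3c := (SimpleGraph.Walk.cons_isCycle_iff q3 hadj3).mp (hC'req ▸ hC'r)
          have hglC' : ((c0.rotate _ hu0).rotate _ hvC).edges.getLast?
              = some s(z2, Sum.inr (i, true)) := by
            rw [hC'eq, SimpleGraph.Walk.edges_cons, auxGLcons _ ?_]
            · exact hgl2
            · intro h; rw [h] at hgl2; simp at hgl2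
          have hhead : ((c0.rotate _ hu0).rotate _ hvC).reverse.edges.head?
              = some s(Sum.inr (i, true), s3) := by
            rw [hC'req, SimpleGraph.Walk.edges_cons]; simp
          rw [SimpleGraph.Walk.edges_reverse, List.head?_reverse, hglC'] at hhead
          have hs3 : s3 = Sum.inl (i, b i) := by
            rcases Sym2.eq_iff.mp (Option.some.inj hhead) with ⟨h3, h4⟩ | ⟨h3, h4⟩
            · rw [hz2B] at h3; simp at h3
            · exact h3 ▸ hz2B
          subst hs3
          have hq3edges : ∀ e ∈ q3.edges, e ∈ (c0.rotate _ hu0).edges := by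
            intro e he'
            apply (hmemE _).mp
            have h2 : e ∈ ((c0.rotate _ hu0).rotate _ hvC).reverse.edges := by
              rw [hC'req, SimpleGraph.Walk.edges_cons]
              exact List.mem_cons_of_mem _ he'
            rwa [SimpleGraph.Walk.edges_reverse, List.mem_reverse] at h2
          have huq3 : (Sum.inr (i, false) : (Fin t × V) ⊕ (Fin t × Bool)) ∈ q3.support := by
            have h2 : (Sum.inr (i, false) : (Fin t × V) ⊕ (Fin t × Bool))
                ∈ ((c0.rotate _ hu0).rotate _ hvC).reverse.support := by
              rw [SimpleGraph.Walk.support_reverse, List.mem_reverse]; exact huC'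
            rw [hC'req, SimpleGraph.Walk.support_cons] at h2
            rcases List.mem_cons.mp h2 with h | h
            · exact absurd h (by simp)
            · exact h
          exact hAu _ (hq3edges _ (aux_vside i q3 hq3c.1 huq3)) Sym2.eq_swap
      · -- neither gateway edge is used: the cycle can never enter the block, contradiction
        have hseal := auxSeal _ (Sum.inr (i, false)) (Sum.inr (i, true))
          (Sum.inl (i, a i)) (Sum.inl (i, b i)) (aux_hclSeal i) (c0.rotate _ hu0)
          (by rintro ⟨x, h⟩; simp at h)
          (fun e he => ⟨hAu e he, fun h => hvb (h ▸ he)⟩)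
        exact hseal _ (hallC (a i)) ⟨a i, rfl⟩
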